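/- Let the MPS be in canonical form with normalized wavefunction Σ_σ |Ψ(σ)|² = 1, and let χ' ≥ 1 be a truncation rank with 2 ε(χ') < 1 (so that Ψ̃_T ≠ 0). Let Ψ_T = Ψ̃_T / ‖Ψ̃_T‖ be the renormalized truncated wavefunction. Then the wavefunction fidelity satisfies 𝓕₂ = |⟨Ψ, Ψ_T⟩|² ≥ 1 − 2 ε(χ'). -/

import Mathlib

open Matrix

/-- Partial product `Λ⁰ Γ¹ Λ¹ ⋯ Γⁱ Λⁱ` of an MPS; the tensor `Γ i` is the site tensor
of site `i + 1` (sites are numbered `1, …, N`, bonds `0, 1, …, N`). -/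
noncomputable def mpsW {d : ℕ} (χ : ℕ → ℕ)
    (Γ : (i : ℕ) → Fin d → Matrix (Fin (χ i)) (Fin (χ (i + 1))) ℂ)
    (Λ : (i : ℕ) → Matrix (Fin (χ i)) (Fin (χ i)) ℂ) :
    (i : ℕ) → (ℕ → Fin d) → Matrix (Fin (χ 0)) (Fin (χ i)) ℂ
  | 0, _ => Λ 0
  | (i + 1), σ => mpsW χ Γ Λ i σ * Γ i (σ i) * Λ (i + 1)

/-- The MPS wavefunction `Ψ(σ)`: the unique entry (written as the sum of all entries) of the
`1 × 1` matrix `Λ⁰ Γ¹ Λ¹ Γ² Λ² ⋯ Γᴺ Λᴺ` (the bond dimensions satisfy `χ 0 = χ N = 1`). -/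
noncomputable def mpsPsi {d : ℕ} [NeZero d] (N : ℕ) (χ : ℕ → ℕ)
    (Γ : (i : ℕ) → Fin d → Matrix (Fin (χ i)) (Fin (χ (i + 1))) ℂ)
    (Λ : (i : ℕ) → Matrix (Fin (χ i)) (Fin (χ i)) ℂ)
    (σ : Fin N → Fin d) : ℂ :=
  ∑ a, ∑ b, mpsW χ Γ Λ N (fun k => if h : k < N then σ ⟨k, h⟩ else 0) a b

/-- The diagonal projector `P` onto the first `χ'` basis vectors. -/
noncomputable def truncP (χ' k : ℕ) : Matrix (Fin k) (Fin k) ℂ :=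
  Matrix.diagonal fun α => if (α : ℕ) < χ' then 1 else 0

/-- Partial product of the truncated MPS, with the projector `P` inserted at every
interior bond `i = 1, …, N - 1`. -/
noncomputable def mpsWT {d : ℕ} (N χ' : ℕ) (χ : ℕ → ℕ)
    (Γ : (i : ℕ) → Fin d → Matrix (Fin (χ i)) (Fin (χ (i + 1))) ℂ)
    (Λ : (i : ℕ) → Matrix (Fin (χ i)) (Fin (χ i)) ℂ) :
    (i : ℕ) → (ℕ → Fin d) → Matrix (Fin (χ 0)) (Fin (χ i)) ℂ
  | 0, _ => Λ 0
  | (i + 1), σ => mpsWT N χ' χ Γ Λ i σ * Γ i (σ i) * Λ (i + 1) *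
      (if i + 1 < N then truncP χ' (χ (i + 1)) else 1)

/-- The truncated wavefunction `Ψ̃_T(σ)`: the unique entry of
`Λ⁰ Γ¹ Λ¹ P₁ Γ² Λ² P₂ ⋯ P_{N-1} Γᴺ Λᴺ`. -/
noncomputable def mpsPsiT {d : ℕ} [NeZero d] (N χ' : ℕ) (χ : ℕ → ℕ)
    (Γ : (i : ℕ) → Fin d → Matrix (Fin (χ i)) (Fin (χ (i + 1))) ℂ)
    (Λ : (i : ℕ) → Matrix (Fin (χ i)) (Fin (χ i)) ℂ)
    (σ : Fin N → Fin d) : ℂ :=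
  ∑ a, ∑ b, mpsWT N χ' χ Γ Λ N (fun k => if h : k < N then σ ⟨k, h⟩ else 0) a b

/-- Canonical form: for every site `i + 1` (`i < N`), with `A = Λ i * Γ i s` and
`B = Γ i s * Λ (i+1)`, one has `∑ s, Aᴴ A = 1` and `∑ s, B Bᴴ = 1`. -/
noncomputable def IsCanonicalMPS {d : ℕ} (N : ℕ) (χ : ℕ → ℕ)
    (Γ : (i : ℕ) → Fin d → Matrix (Fin (χ i)) (Fin (χ (i + 1))) ℂ)
    (Λ : (i : ℕ) → Matrix (Fin (χ i)) (Fin (χ i)) ℂ) : Prop :=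
  ∀ i < N,
    (∑ s : Fin d, (Λ i * Γ i s)ᴴ * (Λ i * Γ i s) = 1) ∧
    (∑ s : Fin d, (Γ i s * Λ (i + 1)) * (Γ i s * Λ (i + 1))ᴴ = 1)

/-- Local truncation error `ε_i(χ') = ∑_{α ≥ χ'} (Λ^{[i]}_{αα})²`. -/
noncomputable def locErr (χ' : ℕ) (χ : ℕ → ℕ)
    (Λ : (i : ℕ) → Matrix (Fin (χ i)) (Fin (χ i)) ℂ) (i : ℕ) : ℝ :=
  ∑ α : Fin (χ i), if χ' ≤ (α : ℕ) then ((Λ i α α).re) ^ 2 else 0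

/-- Global truncation error `ε(χ') = ∑_{i=1}^{N-1} ε_i(χ')`. -/
noncomputable def globErr (N χ' : ℕ) (χ : ℕ → ℕ)
    (Λ : (i : ℕ) → Matrix (Fin (χ i)) (Fin (χ i)) ℂ) : ℝ :=
  ∑ i ∈ Finset.Ico 1 N, locErr χ' χ Λ i


section Gadget
variable {d N : ℕ} [NeZero d]

variable {d N : ℕ} [NeZero d]

lemma sum_combine {α : Type*} [AddCommMonoid α] (p : Fin N → Prop) [DecidablePred p]
    (h : (Fin N → Fin d) → α) :
    ∑ σ : Fin N → Fin d, ∑ τ : Fin N → Fin d, h (fun i => if p i then σ i else τ i)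
      = d ^ N • ∑ ρ : Fin N → Fin d, h ρ := by
  let e : ((Fin N → Fin d) × (Fin N → Fin d)) ≃ ((Fin N → Fin d) × (Fin N → Fin d)) :=
    { toFun := fun x => (fun i => if p i then x.1 i else x.2 i,
                         fun i => if p i then x.2 i else x.1 i)
      invFun := fun x => (fun i => if p i then x.1 i else x.2 i,
                          fun i => if p i then x.2 i else x.1 i)
      left_inv := by
        intro x; ext i <;> by_cases hp : p i <;> simp [hp]
      right_inv := by
        intro x; ext i <;> by_cases hp : p i <;> simp [hp] }
  calc ∑ σ : Fin N → Fin d, ∑ τ : Fin N → Fin d, h (fun i => if p i then σ i else τ i)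
      = ∑ x : (Fin N → Fin d) × (Fin N → Fin d), (fun y : (Fin N → Fin d) × (Fin N → Fin d) => h y.1) (e x) := by
        rw [Fintype.sum_prod_type]; rfl
    _ = ∑ x : (Fin N → Fin d) × (Fin N → Fin d), h x.1 := Equiv.sum_comp e (fun y => h y.1)
    _ = ∑ σ : Fin N → Fin d, ∑ _τ : Fin N → Fin d, h σ := by rw [Fintype.sum_prod_type]
    _ = d ^ N • ∑ ρ : Fin N → Fin d, h ρ := by
        simp [Finset.sum_const, Fintype.card_fun, Finset.smul_sum]

lemma sum_eval {α : Type*} [AddCommMonoid α] (k : Fin N) (X : Fin d → α) :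
    ∑ σ : Fin N → Fin d, X (σ k) = d ^ (N - 1) • ∑ s, X s := by
  calc ∑ σ : Fin N → Fin d, X (σ k)
      = ∑ x : Fin d × ({ j : Fin N // j ≠ k } → Fin d), X x.1 :=
        (Equiv.sum_comp (Equiv.funSplitAt k (Fin d)).symm
          (fun σ => X (σ k))).symm.trans (by
            apply Finset.sum_congr rfl; intro x _
            simp [Equiv.funSplitAt, Equiv.piSplitAt])
    _ = ∑ s : Fin d, ∑ _g : { j : Fin N // j ≠ k } → Fin d, X s := Fintype.sum_prod_type _
    _ = d ^ (N - 1) • ∑ s, X s := by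
        have hc : Fintype.card { j : Fin N // j ≠ k } = N - 1 := by
          have := Fintype.card_subtype_compl (fun j : Fin N => j = k)
          simpa [Fintype.card_subtype_eq] using this
        simp [Finset.sum_const, Fintype.card_fun, hc, Finset.smul_sum, Finset.sum_comm]
end Gadget

/-- Extension of a configuration to `ℕ`. -/
noncomputable def cfgE {d : ℕ} [NeZero d] (N : ℕ) (σ : Fin N → Fin d) : ℕ → Fin d :=
  fun k => if h : k < N then σ ⟨k, h⟩ else 0

section SplitSum
variable {d N : ℕ} [NeZero d]

lemma sum_split {m n p q : Type*} [Fintype n] [Fintype p]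
    (k : Fin N) (pr : Fin N → Prop) [DecidablePred pr] (hpk : ¬ pr k)
    (L : Fin d → Matrix m n ℂ) (B : (Fin N → Fin d) → Matrix n p ℂ) (R : Fin d → Matrix p q ℂ)
    (hB : ∀ σ τ : Fin N → Fin d, B (fun i => if pr i then σ i else τ i) = B σ) :
    (d ^ N : ℕ) • ∑ ρ : Fin N → Fin d, L (ρ k) * B ρ * R (ρ k)
      = (d ^ (N - 1) : ℕ) • ∑ s : Fin d, L s * (∑ ρ : Fin N → Fin d, B ρ) * R s := by
  rw [← sum_combine pr (fun ρ => L (ρ k) * B ρ * R (ρ k)),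
    ← sum_eval k (fun s => L s * (∑ ρ : Fin N → Fin d, B ρ) * R s), Finset.sum_comm]
  apply Finset.sum_congr rfl
  intro τ _
  have : ∀ σ : Fin N → Fin d,
      L ((fun i => if pr i then σ i else τ i) k) * B (fun i => if pr i then σ i else τ i)
        * R ((fun i => if pr i then σ i else τ i) k) = L (τ k) * B σ * R (τ k) := by
    intro σ
    rw [hB σ τ]
    simp only [if_neg hpk]
  rw [Finset.sum_congr rfl (fun σ _ => this σ)]
  rw [← Matrix.sum_mul, ← Matrix.mul_sum]

end SplitSum

section MPSAux

variable {d : ℕ} [NeZero d] {χ : ℕ → ℕ}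
  (Γ : (i : ℕ) → Fin d → Matrix (Fin (χ i)) (Fin (χ (i + 1))) ℂ)
  (Λ : (i : ℕ) → Matrix (Fin (χ i)) (Fin (χ i)) ℂ)

/-- pseudo-identity rectangular matrix -/
noncomputable def pid (m n : ℕ) : Matrix (Fin m) (Fin n) ℂ :=
  Matrix.of fun a b => if (a : ℕ) = (b : ℕ) then 1 else 0

lemma pid_eq_one (m : ℕ) : pid m m = 1 := by
  ext a b
  simp [pid, Matrix.one_apply, Fin.ext_iff]

/-- Right partial product `Γ k Λ (k+1) ⋯ Γ (N-1) Λ N`. -/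
noncomputable def Vm (N k : ℕ) (σ : ℕ → Fin d) : Matrix (Fin (χ k)) (Fin (χ N)) ℂ :=
  if h : k < N then Γ k (σ k) * Λ (k + 1) * Vm N (k + 1) σ else pid (χ k) (χ N)
termination_by N - k
decreasing_by omega

/-- Truncated right partial product. -/
noncomputable def VTm (N χ' k : ℕ) (σ : ℕ → Fin d) : Matrix (Fin (χ k)) (Fin (χ N)) ℂ :=
  if h : k < N then Γ k (σ k) * Λ (k + 1) *
      (if k + 1 < N then truncP χ' (χ (k + 1)) else 1) * VTm N χ' (k + 1) σ
  else pid (χ k) (χ N)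
termination_by N - k
decreasing_by omega

lemma Vm_def (N k : ℕ) (σ : ℕ → Fin d) :
    Vm Γ Λ N k σ = if h : k < N then Γ k (σ k) * Λ (k + 1) * Vm Γ Λ N (k + 1) σ
      else pid (χ k) (χ N) := by
  rw [Vm]

lemma VTm_def (N χ' k : ℕ) (σ : ℕ → Fin d) :
    VTm Γ Λ N χ' k σ = if h : k < N then Γ k (σ k) * Λ (k + 1) *
      (if k + 1 < N then truncP χ' (χ (k + 1)) else 1) * VTm Γ Λ N χ' (k + 1) σ
      else pid (χ k) (χ N) := by
  rw [VTm]

lemma Vm_congr (N : ℕ) : ∀ k (σ τ : ℕ → Fin d), (∀ i, k ≤ i → i < N → σ i = τ i) →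
    Vm Γ Λ N k σ = Vm Γ Λ N k τ := by
  have H : ∀ m k (σ τ : ℕ → Fin d), N - k ≤ m → (∀ i, k ≤ i → i < N → σ i = τ i) →
      Vm Γ Λ N k σ = Vm Γ Λ N k τ := by
    intro m
    induction m with
    | zero =>
      intro k σ τ hm _
      rw [Vm_def Γ Λ N k σ, Vm_def Γ Λ N k τ, dif_neg (by omega), dif_neg (by omega)]
    | succ m ih =>
      intro k σ τ hm hag
      rw [Vm_def Γ Λ N k σ, Vm_def Γ Λ N k τ]
      by_cases h : k < N
      · rw [dif_pos h, dif_pos h, hag k le_rfl h,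
          ih (k+1) σ τ (by omega) (fun i h1 h2 => hag i (by omega) h2)]
      · rw [dif_neg h, dif_neg h]
  exact fun k σ τ h => H (N - k) k σ τ le_rfl h

lemma VTm_congr (N χ' : ℕ) : ∀ k (σ τ : ℕ → Fin d), (∀ i, k ≤ i → i < N → σ i = τ i) →
    VTm Γ Λ N χ' k σ = VTm Γ Λ N χ' k τ := by
  have H : ∀ m k (σ τ : ℕ → Fin d), N - k ≤ m → (∀ i, k ≤ i → i < N → σ i = τ i) →
      VTm Γ Λ N χ' k σ = VTm Γ Λ N χ' k τ := by
    intro m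
    induction m with
    | zero =>
      intro k σ τ hm _
      rw [VTm_def Γ Λ N χ' k σ, VTm_def Γ Λ N χ' k τ, dif_neg (by omega), dif_neg (by omega)]
    | succ m ih =>
      intro k σ τ hm hag
      rw [VTm_def Γ Λ N χ' k σ, VTm_def Γ Λ N χ' k τ]
      by_cases h : k < N
      · rw [dif_pos h, dif_pos h, hag k le_rfl h,
          ih (k+1) σ τ (by omega) (fun i h1 h2 => hag i (by omega) h2)]
      · rw [dif_neg h, dif_neg h]
  exact fun k σ τ h => H (N - k) k σ τ le_rfl h

lemma mpsW_congr : ∀ k (σ τ : ℕ → Fin d), (∀ i, i < k → σ i = τ i) →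
    mpsW χ Γ Λ k σ = mpsW χ Γ Λ k τ := by
  intro k
  induction k with
  | zero => intro σ τ _; rfl
  | succ k ih =>
    intro σ τ hag
    show mpsW χ Γ Λ k σ * Γ k (σ k) * Λ (k+1) = mpsW χ Γ Λ k τ * Γ k (τ k) * Λ (k+1)
    rw [ih σ τ (fun i hi => hag i (by omega)), hag k (by omega)]

/-- Splitting of the full product at bond `k`. -/
lemma mpsW_split (N : ℕ) : ∀ k, k ≤ N → ∀ σ : ℕ → Fin d,
    mpsW χ Γ Λ N σ = mpsW χ Γ Λ k σ * Vm Γ Λ N k σ := by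
  have H : ∀ m k, N - k ≤ m → k ≤ N → ∀ σ : ℕ → Fin d,
      mpsW χ Γ Λ N σ = mpsW χ Γ Λ k σ * Vm Γ Λ N k σ := by
    intro m
    induction m with
    | zero =>
      intro k hm hk σ
      have : k = N := by omega
      subst this
      rw [Vm_def, dif_neg (by omega), pid_eq_one, Matrix.mul_one]
    | succ m ih =>
      intro k hm hk σ
      by_cases h : k < N
      · rw [Vm_def, dif_pos h, ih (k+1) (by omega) (by omega) σ]
        show mpsW χ Γ Λ (k+1) σ * Vm Γ Λ N (k+1) σ = _
        show mpsW χ Γ Λ k σ * Γ k (σ k) * Λ (k+1) * Vm Γ Λ N (k+1) σ = _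
        simp only [Matrix.mul_assoc]
      · have : k = N := by omega
        subst this
        rw [Vm_def, dif_neg (by omega), pid_eq_one, Matrix.mul_one]
  exact fun k hk σ => H (N - k) k le_rfl hk σ

lemma mpsWT_split (N χ' : ℕ) : ∀ k, k ≤ N → ∀ σ : ℕ → Fin d,
    mpsWT N χ' χ Γ Λ N σ = mpsWT N χ' χ Γ Λ k σ * VTm Γ Λ N χ' k σ := by
  have H : ∀ m k, N - k ≤ m → k ≤ N → ∀ σ : ℕ → Fin d,
      mpsWT N χ' χ Γ Λ N σ = mpsWT N χ' χ Γ Λ k σ * VTm Γ Λ N χ' k σ := by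
    intro m
    induction m with
    | zero =>
      intro k hm hk σ
      have : k = N := by omega
      subst this
      rw [VTm_def, dif_neg (by omega), pid_eq_one, Matrix.mul_one]
    | succ m ih =>
      intro k hm hk σ
      by_cases h : k < N
      · rw [VTm_def, dif_pos h, ih (k+1) (by omega) (by omega) σ]
        show mpsWT N χ' χ Γ Λ (k+1) σ * VTm Γ Λ N χ' (k+1) σ = _
        show mpsWT N χ' χ Γ Λ k σ * Γ k (σ k) * Λ (k+1) *
          (if k + 1 < N then truncP χ' (χ (k + 1)) else 1) * VTm Γ Λ N χ' (k+1) σ = _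
        simp only [Matrix.mul_assoc]
      · have : k = N := by omega
        subst this
        rw [VTm_def, dif_neg (by omega), pid_eq_one, Matrix.mul_one]
  exact fun k hk σ => H (N - k) k le_rfl hk σ

lemma cfgE_comb_lt {N k : ℕ} (hk : k ≤ N) (σ τ : Fin N → Fin d) :
    ∀ i, i < k →
      cfgE N (fun i => if (i : ℕ) < k then σ i else τ i) i = cfgE N σ i := by
  intro i hi
  have hiN : i < N := lt_of_lt_of_le hi hk
  simp only [cfgE, dif_pos hiN]
  simp [hi]

lemma cfgE_comb_at {N k : ℕ} (hk : k < N) (σ τ : Fin N → Fin d) :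
    cfgE N (fun i => if (i : ℕ) < k then σ i else τ i) k = τ ⟨k, hk⟩ := by
  simp [cfgE, dif_pos hk]

lemma cfgE_at {N k : ℕ} (hk : k < N) (σ : Fin N → Fin d) :
    cfgE N σ k = σ ⟨k, hk⟩ := by
  simp [cfgE, dif_pos hk]

/-- Left Gram matrix identity: canonical form makes the summed left parts proportional
to `Λᴴ Λ`. -/
lemma GW_eq (N : ℕ) (hcano : IsCanonicalMPS N χ Γ Λ) :
    ∀ k, k ≤ N →
    ∑ σ : Fin N → Fin d, (mpsW χ Γ Λ k (cfgE N σ))ᴴ * mpsW χ Γ Λ k (cfgE N σ)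
      = ((d : ℂ) ^ (N - k)) • ((Λ k)ᴴ * Λ k) := by
  intro k
  induction k with
  | zero =>
    intro _
    have h0 : ∀ σ : Fin N → Fin d,
        (mpsW χ Γ Λ 0 (cfgE N σ))ᴴ * mpsW χ Γ Λ 0 (cfgE N σ) = (Λ 0)ᴴ * Λ 0 := fun _ => rfl
    rw [Finset.sum_congr rfl (fun σ _ => h0 σ), Finset.sum_const, Finset.card_univ,
      Fintype.card_fun, Fintype.card_fin, Fintype.card_fin, Nat.sub_zero,
      ← Nat.cast_smul_eq_nsmul ℂ, Nat.cast_pow]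
  | succ k ih =>
    intro hk1
    have hk : k < N := hk1
    have hd : ((d : ℂ) ^ N) ≠ 0 := pow_ne_zero _ (Nat.cast_ne_zero.mpr (NeZero.ne d))
    have hinj := smul_right_injective
      (Matrix (Fin (χ (k+1))) (Fin (χ (k+1))) ℂ) hd
    apply hinj
    show ((d : ℂ) ^ N) • _ = ((d : ℂ) ^ N) • _
    set L : Fin d → Matrix (Fin (χ (k+1))) (Fin (χ k)) ℂ :=
      fun s => (Λ (k+1))ᴴ * (Γ k s)ᴴ with hL
    set B : (Fin N → Fin d) → Matrix (Fin (χ k)) (Fin (χ k)) ℂ :=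
      fun ρ => (mpsW χ Γ Λ k (cfgE N ρ))ᴴ * mpsW χ Γ Λ k (cfgE N ρ) with hBdef
    set R : Fin d → Matrix (Fin (χ k)) (Fin (χ (k+1))) ℂ :=
      fun s => Γ k s * Λ (k+1) with hR
    have hB : ∀ σ τ : Fin N → Fin d, B (fun i => if (i : ℕ) < k then σ i else τ i) = B σ := by
      intro σ τ
      simp only [hBdef]
      rw [mpsW_congr Γ Λ k _ _ (cfgE_comb_lt hk.le σ τ)]
    have hpt : ∀ ρ : Fin N → Fin d,
        (mpsW χ Γ Λ (k+1) (cfgE N ρ))ᴴ * mpsW χ Γ Λ (k+1) (cfgE N ρ)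
          = L (ρ ⟨k, hk⟩) * B ρ * R (ρ ⟨k, hk⟩) := by
      intro ρ
      show (mpsW χ Γ Λ k (cfgE N ρ) * Γ k (cfgE N ρ k) * Λ (k+1))ᴴ *
        (mpsW χ Γ Λ k (cfgE N ρ) * Γ k (cfgE N ρ k) * Λ (k+1)) = _
      rw [cfgE_at hk ρ]
      simp only [hL, hBdef, hR, Matrix.conjTranspose_mul, Matrix.mul_assoc]
    calc ((d : ℂ) ^ N) • ∑ σ : Fin N → Fin d,
          (mpsW χ Γ Λ (k+1) (cfgE N σ))ᴴ * mpsW χ Γ Λ (k+1) (cfgE N σ)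
        = (d ^ N : ℕ) • ∑ ρ : Fin N → Fin d, L (ρ ⟨k, hk⟩) * B ρ * R (ρ ⟨k, hk⟩) := by
          rw [← Nat.cast_smul_eq_nsmul ℂ, Nat.cast_pow]
          exact congrArg _ (Finset.sum_congr rfl (fun ρ _ => hpt ρ))
      _ = (d ^ (N - 1) : ℕ) • ∑ s : Fin d, L s * (∑ ρ : Fin N → Fin d, B ρ) * R s :=
          sum_split ⟨k, hk⟩ (fun i => (i : ℕ) < k) (by simp) L B R hB
      _ = ((d : ℂ) ^ N) • ((d : ℂ) ^ (N - (k+1))) • ((Λ (k+1))ᴴ * Λ (k+1)) := by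
          rw [ih (le_of_lt hk)]
          have hca : ∑ s : Fin d, L s * ((Λ k)ᴴ * Λ k) * R s
              = (Λ (k+1))ᴴ * Λ (k+1) := by
            have h1 : ∀ s : Fin d, L s * ((Λ k)ᴴ * Λ k) * R s
                = (Λ (k+1))ᴴ * (((Λ k * Γ k s)ᴴ * (Λ k * Γ k s)) * Λ (k+1)) := by
              intro s
              simp only [hL, hR, Matrix.conjTranspose_mul, Matrix.mul_assoc]
            rw [Finset.sum_congr rfl (fun s _ => h1 s), ← Matrix.mul_sum, ← Matrix.sum_mul,
              (hcano k hk).1, Matrix.one_mul]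
          have h2 : ∀ s : Fin d, L s * (((d : ℂ) ^ (N - k)) • ((Λ k)ᴴ * Λ k)) * R s
              = ((d : ℂ) ^ (N - k)) • (L s * ((Λ k)ᴴ * Λ k) * R s) := by
            intro s
            rw [Matrix.mul_smul, Matrix.smul_mul]
          rw [Finset.sum_congr rfl (fun s _ => h2 s), ← Finset.smul_sum, hca,
            ← Nat.cast_smul_eq_nsmul ℂ, Nat.cast_pow, smul_smul, smul_smul]
          rw [← pow_add, ← pow_add]
          congr 2
          omega

lemma cfgE_comb_ge {N k : ℕ} (σ τ : Fin N → Fin d) :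
    ∀ i, k + 1 ≤ i → i < N →
      cfgE N (fun i => if k + 1 ≤ (i : ℕ) then σ i else τ i) i = cfgE N σ i := by
  intro i hi hiN
  simp only [cfgE, dif_pos hiN]
  simp [hi]

lemma cfgE_comb_ge_at {N k : ℕ} (hk : k < N) (σ τ : Fin N → Fin d) :
    cfgE N (fun i => if k + 1 ≤ (i : ℕ) then σ i else τ i) k = τ ⟨k, hk⟩ := by
  simp only [cfgE, dif_pos hk]
  simp

/-- Projector (or identity at the boundary) at bond `k`. -/
noncomputable def Qm (χ : ℕ → ℕ) (N χ' k : ℕ) : Matrix (Fin (χ k)) (Fin (χ k)) ℂ :=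
  if k < N then truncP χ' (χ k) else 1

/-- Mixed right Gram matrix (with multiplicity `d ^ k`). -/
noncomputable def Mmix (N χ' k : ℕ) : Matrix (Fin (χ k)) (Fin (χ k)) ℂ :=
  ∑ σ : Fin N → Fin d, VTm Γ Λ N χ' k (cfgE N σ) * (Vm Γ Λ N k (cfgE N σ))ᴴ

lemma Mmix_N (N χ' : ℕ) : Mmix Γ Λ N χ' N = ((d : ℂ) ^ N) • 1 := by
  have h : ∀ σ : Fin N → Fin d,
      VTm Γ Λ N χ' N (cfgE N σ) * (Vm Γ Λ N N (cfgE N σ))ᴴ = 1 := by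
    intro σ
    rw [VTm_def, Vm_def, dif_neg (lt_irrefl N), dif_neg (lt_irrefl N), pid_eq_one]
    simp
  rw [Mmix, Finset.sum_congr rfl (fun σ _ => h σ), Finset.sum_const, Finset.card_univ,
    Fintype.card_fun, Fintype.card_fin, Fintype.card_fin,
    ← Nat.cast_smul_eq_nsmul ℂ, Nat.cast_pow]

lemma Mmix_rec (N χ' k : ℕ) (hk : k < N) :
    (d : ℂ) • Mmix Γ Λ N χ' k
      = ∑ s : Fin d, (Γ k s * Λ (k+1) * Qm χ N χ' (k+1)) * Mmix Γ Λ N χ' (k+1)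
          * (Γ k s * Λ (k+1))ᴴ := by
  have hd : ((d : ℂ) ^ (N - 1)) ≠ 0 := pow_ne_zero _ (Nat.cast_ne_zero.mpr (NeZero.ne d))
  apply smul_right_injective (Matrix (Fin (χ k)) (Fin (χ k)) ℂ) hd
  show ((d : ℂ) ^ (N - 1)) • ((d : ℂ) • Mmix Γ Λ N χ' k) = ((d : ℂ) ^ (N - 1)) • _
  rw [smul_smul, ← pow_succ]
  have hNk : N - 1 + 1 = N := by omega
  rw [hNk]
  set L : Fin d → Matrix (Fin (χ k)) (Fin (χ (k+1))) ℂ :=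
    fun s => Γ k s * Λ (k+1) * Qm χ N χ' (k+1) with hL
  set B : (Fin N → Fin d) → Matrix (Fin (χ (k+1))) (Fin (χ (k+1))) ℂ :=
    fun ρ => VTm Γ Λ N χ' (k+1) (cfgE N ρ) * (Vm Γ Λ N (k+1) (cfgE N ρ))ᴴ with hBdef
  set R : Fin d → Matrix (Fin (χ (k+1))) (Fin (χ k)) ℂ :=
    fun s => (Γ k s * Λ (k+1))ᴴ with hR
  have hB : ∀ σ τ : Fin N → Fin d, B (fun i => if k + 1 ≤ (i : ℕ) then σ i else τ i) = B σ := by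
    intro σ τ
    simp only [hBdef]
    rw [VTm_congr Γ Λ N χ' (k+1) _ _ (cfgE_comb_ge σ τ),
      Vm_congr Γ Λ N (k+1) _ _ (cfgE_comb_ge σ τ)]
  have hpt : ∀ ρ : Fin N → Fin d,
      VTm Γ Λ N χ' k (cfgE N ρ) * (Vm Γ Λ N k (cfgE N ρ))ᴴ
        = L (ρ ⟨k, hk⟩) * B ρ * R (ρ ⟨k, hk⟩) := by
    intro ρ
    rw [VTm_def Γ Λ N χ' k (cfgE N ρ), Vm_def Γ Λ N k (cfgE N ρ), dif_pos hk, dif_pos hk,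
      cfgE_at hk ρ]
    simp only [hL, hBdef, hR, Qm, Matrix.conjTranspose_mul, Matrix.mul_assoc]
  calc ((d : ℂ) ^ N) • Mmix Γ Λ N χ' k
      = (d ^ N : ℕ) • ∑ ρ : Fin N → Fin d, L (ρ ⟨k, hk⟩) * B ρ * R (ρ ⟨k, hk⟩) := by
        rw [← Nat.cast_smul_eq_nsmul ℂ, Nat.cast_pow]
        exact congrArg _ (Finset.sum_congr rfl (fun ρ _ => hpt ρ))
    _ = (d ^ (N - 1) : ℕ) • ∑ s : Fin d, L s * (∑ ρ : Fin N → Fin d, B ρ) * R s :=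
        sum_split ⟨k, hk⟩ (fun i => k + 1 ≤ (i : ℕ)) (by simp) L B R hB
    _ = ((d : ℂ) ^ (N - 1)) • ∑ s : Fin d,
          (Γ k s * Λ (k+1) * Qm χ N χ' (k+1)) * Mmix Γ Λ N χ' (k+1) * (Γ k s * Λ (k+1))ᴴ := by
        rw [← Nat.cast_smul_eq_nsmul ℂ, Nat.cast_pow]
        rfl

lemma dot_star_eq {n : Type*} [Fintype n] (u : n → ℂ) :
    u ⬝ᵥ star u = ((∑ b, ‖u b‖ ^ 2 : ℝ) : ℂ) := by
  rw [dotProduct]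
  push_cast
  apply Finset.sum_congr rfl
  intro b _
  rw [Pi.star_apply, Complex.star_def, Complex.mul_conj, Complex.normSq_eq_norm_sq]
  push_cast
  ring

lemma dot_mulVec_sum {ι : Type*} {n m : Type*} [Fintype n] [Fintype m]
    (v : n → ℂ) (w : m → ℂ) (M : ι → Matrix n m ℂ) (s : Finset ι) :
    ∑ i ∈ s, v ⬝ᵥ (M i *ᵥ w) = v ⬝ᵥ ((∑ i ∈ s, M i) *ᵥ w) :=
  (map_sum (AddMonoidHom.mk' (fun A : Matrix n m ℂ => v ⬝ᵥ (A *ᵥ w))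
    (fun A B => by simp [Matrix.add_mulVec, dotProduct_add])) M s).symm

/-- Right-canonical norm identity for one site. -/
lemma rc_norm {n m : Type*} [Fintype n] [Fintype m] [DecidableEq n] [DecidableEq m]
    (B : Fin d → Matrix n m ℂ) (hBB : ∑ s : Fin d, B s * (B s)ᴴ = 1) (v : n → ℂ) :
    ∑ s : Fin d, ∑ b, ‖(v ᵥ* B s) b‖ ^ 2 = ∑ α, ‖v α‖ ^ 2 := by
  have h1 : ∀ s, (v ᵥ* B s) ⬝ᵥ star (v ᵥ* B s) = v ⬝ᵥ ((B s * (B s)ᴴ) *ᵥ star v) := by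
    intro s
    rw [Matrix.star_vecMul, Matrix.dotProduct_mulVec, Matrix.dotProduct_mulVec,
      Matrix.vecMul_vecMul]
  have hc : ((∑ s : Fin d, ∑ b, ‖(v ᵥ* B s) b‖ ^ 2 : ℝ) : ℂ) = ((∑ α, ‖v α‖ ^ 2 : ℝ) : ℂ) := by
    calc ((∑ s : Fin d, ∑ b, ‖(v ᵥ* B s) b‖ ^ 2 : ℝ) : ℂ)
        = ∑ s : Fin d, ((∑ b, ‖(v ᵥ* B s) b‖ ^ 2 : ℝ) : ℂ) := by push_cast; rfl
      _ = ∑ s : Fin d, (v ᵥ* B s) ⬝ᵥ star (v ᵥ* B s) :=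
          Finset.sum_congr rfl (fun s _ => (dot_star_eq _).symm)
      _ = ∑ s : Fin d, v ⬝ᵥ ((B s * (B s)ᴴ) *ᵥ star v) :=
          Finset.sum_congr rfl (fun s _ => h1 s)
      _ = v ⬝ᵥ ((∑ s : Fin d, B s * (B s)ᴴ) *ᵥ star v) := dot_mulVec_sum _ _ _ _
      _ = ((∑ α, ‖v α‖ ^ 2 : ℝ) : ℂ) := by rw [hBB, Matrix.one_mulVec, dot_star_eq]
  exact_mod_cast hc

lemma Q_contract {n : ℕ} (N χ' j : ℕ) (hj : χ j = n) (u : Fin (χ j) → ℂ) :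
    ∑ b, ‖(u ᵥ* Qm χ N χ' j) b‖ ^ 2 ≤ ∑ b, ‖u b‖ ^ 2 := by
  rw [Qm]
  split_ifs with h
  · rw [truncP]
    apply Finset.sum_le_sum
    intro b _
    rw [Matrix.vecMul_diagonal]
    split_ifs with hb
    · simp
    · simp [pow_two_nonneg]
  · rw [Matrix.vecMul_one]

/-- Row norm bound for the truncated right part. -/
lemma VT_row_bound (N χ' : ℕ) (hcano : IsCanonicalMPS N χ Γ Λ) :
    ∀ k, k ≤ N → ∀ v : Fin (χ k) → ℂ,
    ∑ σ : Fin N → Fin d, ∑ b, ‖(v ᵥ* VTm Γ Λ N χ' k (cfgE N σ)) b‖ ^ 2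
      ≤ (d : ℝ) ^ k * ∑ α, ‖v α‖ ^ 2 := by
  have hd0 : (0 : ℝ) < (d : ℝ) := by
    have := NeZero.ne d
    positivity
  have H : ∀ m k, N - k ≤ m → k ≤ N → ∀ v : Fin (χ k) → ℂ,
      ∑ σ : Fin N → Fin d, ∑ b, ‖(v ᵥ* VTm Γ Λ N χ' k (cfgE N σ)) b‖ ^ 2
        ≤ (d : ℝ) ^ k * ∑ α, ‖v α‖ ^ 2 := by
    intro m
    induction m with
    | zero =>
      intro k hm hk v
      obtain rfl : N = k := by omega
      have h0 : ∀ σ : Fin N → Fin d,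
          ∑ b, ‖(v ᵥ* VTm Γ Λ N χ' N (cfgE N σ)) b‖ ^ 2 = ∑ b, ‖v b‖ ^ 2 := by
        intro σ
        rw [VTm_def, dif_neg (lt_irrefl N), pid_eq_one, Matrix.vecMul_one]
      rw [Finset.sum_congr rfl (fun σ _ => h0 σ), Finset.sum_const, Finset.card_univ,
        Fintype.card_fun, Fintype.card_fin, Fintype.card_fin, nsmul_eq_mul]
      push_cast
      exact le_of_eq rfl
    | succ m ih =>
      intro k hm hk v
      by_cases hkN : k < N
      case neg =>
        obtain rfl : N = k := by omega
        have h0 : ∀ σ : Fin N → Fin d,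
            ∑ b, ‖(v ᵥ* VTm Γ Λ N χ' N (cfgE N σ)) b‖ ^ 2 = ∑ b, ‖v b‖ ^ 2 := by
          intro σ
          rw [VTm_def, dif_neg (lt_irrefl N), pid_eq_one, Matrix.vecMul_one]
        rw [Finset.sum_congr rfl (fun σ _ => h0 σ), Finset.sum_const, Finset.card_univ,
          Fintype.card_fun, Fintype.card_fin, Fintype.card_fin, nsmul_eq_mul]
        push_cast
        exact le_of_eq rfl
      case pos =>
        have hdN : (0 : ℝ) < (d : ℝ) ^ N := pow_pos hd0 N
        rw [← mul_le_mul_iff_right₀ hdN]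
        set w : Fin d → Fin (χ (k+1)) → ℂ :=
          fun s => v ᵥ* (Γ k s * Λ (k+1) * Qm χ N χ' (k+1)) with hw
        have hpt : ∀ σ τ : Fin N → Fin d,
            (fun ρ => ∑ b, ‖(v ᵥ* VTm Γ Λ N χ' k (cfgE N ρ)) b‖ ^ 2)
              (fun i => if k + 1 ≤ (i : ℕ) then σ i else τ i)
            = ∑ b, ‖(w (τ ⟨k, hkN⟩) ᵥ* VTm Γ Λ N χ' (k+1) (cfgE N σ)) b‖ ^ 2 := by
          intro σ τ
          simp only []
          rw [VTm_def, dif_pos hkN, cfgE_comb_ge_at hkN σ τ,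
            VTm_congr Γ Λ N χ' (k+1) _ _ (cfgE_comb_ge σ τ)]
          rw [show Γ k (τ ⟨k, hkN⟩) * Λ (k+1) *
              (if k + 1 < N then truncP χ' (χ (k+1)) else 1) * VTm Γ Λ N χ' (k+1) (cfgE N σ)
            = (Γ k (τ ⟨k, hkN⟩) * Λ (k+1) * Qm χ N χ' (k+1)) * VTm Γ Λ N χ' (k+1) (cfgE N σ)
            from rfl]
          rw [← Matrix.vecMul_vecMul]
        calc (d : ℝ) ^ N * ∑ σ : Fin N → Fin d, ∑ b, ‖(v ᵥ* VTm Γ Λ N χ' k (cfgE N σ)) b‖ ^ 2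
            = ∑ σ : Fin N → Fin d, ∑ τ : Fin N → Fin d,
                ∑ b, ‖(w (τ ⟨k, hkN⟩) ᵥ* VTm Γ Λ N χ' (k+1) (cfgE N σ)) b‖ ^ 2 := by
              rw [← Finset.sum_congr rfl (fun σ _ => Finset.sum_congr rfl
                  (fun τ _ => (hpt σ τ)))]
              rw [sum_combine (fun i : Fin N => k + 1 ≤ (i : ℕ))
                (fun ρ => ∑ b, ‖(v ᵥ* VTm Γ Λ N χ' k (cfgE N ρ)) b‖ ^ 2), nsmul_eq_mul]
              push_cast
              ring
          _ = ∑ τ : Fin N → Fin d, ∑ σ : Fin N → Fin d,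
                ∑ b, ‖(w (τ ⟨k, hkN⟩) ᵥ* VTm Γ Λ N χ' (k+1) (cfgE N σ)) b‖ ^ 2 :=
              Finset.sum_comm
          _ ≤ ∑ τ : Fin N → Fin d, (d : ℝ) ^ (k+1) * ∑ α, ‖w (τ ⟨k, hkN⟩) α‖ ^ 2 := by
              apply Finset.sum_le_sum
              intro τ _
              exact ih (k+1) (by omega) (by omega) (w (τ ⟨k, hkN⟩))
          _ = (d : ℝ) ^ (N - 1) * ∑ s : Fin d, (d : ℝ) ^ (k+1) * ∑ α, ‖w s α‖ ^ 2 := by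
              rw [sum_eval (⟨k, hkN⟩ : Fin N)
                (fun s => (d : ℝ) ^ (k+1) * ∑ α, ‖w s α‖ ^ 2), nsmul_eq_mul]
              push_cast
              ring
          _ ≤ (d : ℝ) ^ (N - 1) * ∑ s : Fin d, (d : ℝ) ^ (k+1) *
                ∑ α, ‖(v ᵥ* (Γ k s * Λ (k+1))) α‖ ^ 2 := by
              apply mul_le_mul_of_nonneg_left _ (le_of_lt (pow_pos hd0 _))
              apply Finset.sum_le_sum
              intro s _
              apply mul_le_mul_of_nonneg_left _ (le_of_lt (pow_pos hd0 _))
              rw [hw]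
              simp only [← Matrix.vecMul_vecMul]
              exact Q_contract (n := χ (k+1)) N χ' (k+1) rfl _
          _ = (d : ℝ) ^ N * ((d : ℝ) ^ k * ∑ α, ‖v α‖ ^ 2) := by
              rw [← Finset.mul_sum,
                rc_norm (fun s => Γ k s * Λ (k+1)) (hcano k hkN).2 v,
                ← mul_assoc, ← pow_add, show N - 1 + (k + 1) = N + k from by omega,
                pow_add, mul_assoc]
  exact fun k => H (N - k) k le_rfl

/-- Row norm bound for the untruncated right part. -/
lemma V_row_bound (N : ℕ) (hcano : IsCanonicalMPS N χ Γ Λ) :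
    ∀ k, k ≤ N → ∀ v : Fin (χ k) → ℂ,
    ∑ σ : Fin N → Fin d, ∑ b, ‖(v ᵥ* Vm Γ Λ N k (cfgE N σ)) b‖ ^ 2
      ≤ (d : ℝ) ^ k * ∑ α, ‖v α‖ ^ 2 := by
  have hd0 : (0 : ℝ) < (d : ℝ) := by
    have := NeZero.ne d
    positivity
  have H : ∀ m k, N - k ≤ m → k ≤ N → ∀ v : Fin (χ k) → ℂ,
      ∑ σ : Fin N → Fin d, ∑ b, ‖(v ᵥ* Vm Γ Λ N k (cfgE N σ)) b‖ ^ 2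
        ≤ (d : ℝ) ^ k * ∑ α, ‖v α‖ ^ 2 := by
    intro m
    induction m with
    | zero =>
      intro k hm hk v
      obtain rfl : N = k := by omega
      have h0 : ∀ σ : Fin N → Fin d,
          ∑ b, ‖(v ᵥ* Vm Γ Λ N N (cfgE N σ)) b‖ ^ 2 = ∑ b, ‖v b‖ ^ 2 := by
        intro σ
        rw [Vm_def, dif_neg (lt_irrefl N), pid_eq_one, Matrix.vecMul_one]
      rw [Finset.sum_congr rfl (fun σ _ => h0 σ), Finset.sum_const, Finset.card_univ,
        Fintype.card_fun, Fintype.card_fin, Fintype.card_fin, nsmul_eq_mul]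
      push_cast
      exact le_of_eq rfl
    | succ m ih =>
      intro k hm hk v
      by_cases hkN : k < N
      case neg =>
        obtain rfl : N = k := by omega
        have h0 : ∀ σ : Fin N → Fin d,
            ∑ b, ‖(v ᵥ* Vm Γ Λ N N (cfgE N σ)) b‖ ^ 2 = ∑ b, ‖v b‖ ^ 2 := by
          intro σ
          rw [Vm_def, dif_neg (lt_irrefl N), pid_eq_one, Matrix.vecMul_one]
        rw [Finset.sum_congr rfl (fun σ _ => h0 σ), Finset.sum_const, Finset.card_univ,
          Fintype.card_fun, Fintype.card_fin, Fintype.card_fin, nsmul_eq_mul]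
        push_cast
        exact le_of_eq rfl
      case pos =>
        have hdN : (0 : ℝ) < (d : ℝ) ^ N := pow_pos hd0 N
        rw [← mul_le_mul_iff_right₀ hdN]
        set w : Fin d → Fin (χ (k+1)) → ℂ :=
          fun s => v ᵥ* (Γ k s * Λ (k+1)) with hw
        have hpt : ∀ σ τ : Fin N → Fin d,
            (fun ρ => ∑ b, ‖(v ᵥ* Vm Γ Λ N k (cfgE N ρ)) b‖ ^ 2)
              (fun i => if k + 1 ≤ (i : ℕ) then σ i else τ i)
            = ∑ b, ‖(w (τ ⟨k, hkN⟩) ᵥ* Vm Γ Λ N (k+1) (cfgE N σ)) b‖ ^ 2 := by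
          intro σ τ
          simp only []
          rw [Vm_def, dif_pos hkN, cfgE_comb_ge_at hkN σ τ,
            Vm_congr Γ Λ N (k+1) _ _ (cfgE_comb_ge σ τ)]
          rw [← Matrix.vecMul_vecMul]
        calc (d : ℝ) ^ N * ∑ σ : Fin N → Fin d, ∑ b, ‖(v ᵥ* Vm Γ Λ N k (cfgE N σ)) b‖ ^ 2
            = ∑ σ : Fin N → Fin d, ∑ τ : Fin N → Fin d,
                ∑ b, ‖(w (τ ⟨k, hkN⟩) ᵥ* Vm Γ Λ N (k+1) (cfgE N σ)) b‖ ^ 2 := by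
              rw [← Finset.sum_congr rfl (fun σ _ => Finset.sum_congr rfl
                  (fun τ _ => (hpt σ τ)))]
              rw [sum_combine (fun i : Fin N => k + 1 ≤ (i : ℕ))
                (fun ρ => ∑ b, ‖(v ᵥ* Vm Γ Λ N k (cfgE N ρ)) b‖ ^ 2), nsmul_eq_mul]
              push_cast
              ring
          _ = ∑ τ : Fin N → Fin d, ∑ σ : Fin N → Fin d,
                ∑ b, ‖(w (τ ⟨k, hkN⟩) ᵥ* Vm Γ Λ N (k+1) (cfgE N σ)) b‖ ^ 2 :=
              Finset.sum_comm
          _ ≤ ∑ τ : Fin N → Fin d, (d : ℝ) ^ (k+1) * ∑ α, ‖w (τ ⟨k, hkN⟩) α‖ ^ 2 := by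
              apply Finset.sum_le_sum
              intro τ _
              exact ih (k+1) (by omega) (by omega) (w (τ ⟨k, hkN⟩))
          _ = (d : ℝ) ^ (N - 1) * ∑ s : Fin d, (d : ℝ) ^ (k+1) * ∑ α, ‖w s α‖ ^ 2 := by
              rw [sum_eval (⟨k, hkN⟩ : Fin N)
                (fun s => (d : ℝ) ^ (k+1) * ∑ α, ‖w s α‖ ^ 2), nsmul_eq_mul]
              push_cast
              ring
          _ = (d : ℝ) ^ N * ((d : ℝ) ^ k * ∑ α, ‖v α‖ ^ 2) := by
              simp only [hw]
              rw [← Finset.mul_sum,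
                rc_norm (fun s => Γ k s * Λ (k+1)) (hcano k hkN).2 v,
                ← mul_assoc, ← pow_add, show N - 1 + (k + 1) = N + k from by omega,
                pow_add, mul_assoc]
  exact fun k => H (N - k) k le_rfl

lemma cfgE_comb_lt_ge {N k : ℕ} (σ τ : Fin N → Fin d) :
    ∀ i, k ≤ i → i < N →
      cfgE N (fun i => if (i : ℕ) < k then σ i else τ i) i = cfgE N τ i := by
  intro i hi hiN
  simp only [cfgE, dif_pos hiN]
  simp [Nat.not_lt.mpr hi]

lemma entry_pair {m n : Type*} [Fintype m] [Fintype n] [DecidableEq n]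
    (hm : Subsingleton m) (hn : Subsingleton n) (X Y : Matrix m n ℂ) :
    (starRingEnd ℂ) (∑ a, ∑ b, X a b) * (∑ a, ∑ b, Y a b) = Matrix.trace (Xᴴ * Y) := by
  haveI := hm
  haveI := hn
  have cX : (starRingEnd ℂ) (∑ a, ∑ b, X a b)
      = ∑ x : m × n, (starRingEnd ℂ) (X x.1 x.2) := by
    rw [map_sum]
    simp_rw [map_sum]
    exact (Fintype.sum_prod_type' (f := fun a b => (starRingEnd ℂ) (X a b))).symm
  have cY : (∑ a, ∑ b, Y a b) = ∑ x : m × n, Y x.1 x.2 :=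
    (Fintype.sum_prod_type' (f := fun a b => Y a b)).symm
  rw [cX, cY, Fintype.sum_mul_sum]
  have hcollapse : ∀ x : m × n,
      ∑ y : m × n, (starRingEnd ℂ) (X x.1 x.2) * Y y.1 y.2
        = (starRingEnd ℂ) (X x.1 x.2) * Y x.1 x.2 := fun x =>
    Fintype.sum_subsingleton _ x
  rw [Finset.sum_congr rfl (fun x _ => hcollapse x)]
  rw [Matrix.trace]
  rw [Fintype.sum_prod_type]
  rw [Finset.sum_comm]
  apply Finset.sum_congr rfl
  intro b _
  rw [Matrix.diag]
  rw [Matrix.mul_apply]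
  rfl

lemma trace_diagonal_mul {n : Type*} [Fintype n] [DecidableEq n]
    (v : n → ℂ) (M : Matrix n n ℂ) :
    Matrix.trace (Matrix.diagonal v * M) = ∑ α, v α * M α α := by
  rw [Matrix.trace]
  apply Finset.sum_congr rfl
  intro α _
  rw [Matrix.diag, Matrix.mul_apply]
  rw [Finset.sum_eq_single α (fun b _ hb => by
    rw [Matrix.diagonal_apply_ne v (Ne.symm hb), zero_mul]) (by simp)]
  simp

/-- Overlap identity expressing the partially-truncated overlap through `Mmix`. -/
lemma overlap_eq (N χ' : ℕ) (h0 : χ 0 = 1) (hN : χ N = 1)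
    (hcano : IsCanonicalMPS N χ Γ Λ) (k : ℕ) (hk : k ≤ N) :
    ((d : ℂ) ^ N) * ∑ σ : Fin N → Fin d, (starRingEnd ℂ) (mpsPsi N χ Γ Λ σ) *
        (∑ a, ∑ b, (mpsW χ Γ Λ k (cfgE N σ) * Qm χ N χ' k * VTm Γ Λ N χ' k (cfgE N σ)) a b)
      = ((d : ℂ) ^ (N - k)) *
          Matrix.trace ((Λ k)ᴴ * Λ k * (Qm χ N χ' k * Mmix Γ Λ N χ' k)) := by
  haveI hsub0 : Subsingleton (Fin (χ 0)) :=
    Fintype.card_le_one_iff_subsingleton.mp (by rw [Fintype.card_fin, h0])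
  haveI hsubN : Subsingleton (Fin (χ N)) :=
    Fintype.card_le_one_iff_subsingleton.mp (by rw [Fintype.card_fin, hN])
  have hpt : ∀ ρ : Fin N → Fin d,
      (starRingEnd ℂ) (mpsPsi N χ Γ Λ ρ) *
        (∑ a, ∑ b, (mpsW χ Γ Λ k (cfgE N ρ) * Qm χ N χ' k * VTm Γ Λ N χ' k (cfgE N ρ)) a b)
      = Matrix.trace (((mpsW χ Γ Λ k (cfgE N ρ))ᴴ * mpsW χ Γ Λ k (cfgE N ρ)) *
          (Qm χ N χ' k * (VTm Γ Λ N χ' k (cfgE N ρ) * (Vm Γ Λ N k (cfgE N ρ))ᴴ))) := by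
    intro ρ
    have hpsi : mpsPsi N χ Γ Λ ρ = ∑ a, ∑ b, (mpsW χ Γ Λ N (cfgE N ρ)) a b := rfl
    rw [hpsi, entry_pair hsub0 hsubN, mpsW_split Γ Λ N k hk (cfgE N ρ)]
    have hre : ((mpsW χ Γ Λ k (cfgE N ρ) * Vm Γ Λ N k (cfgE N ρ))ᴴ *
        (mpsW χ Γ Λ k (cfgE N ρ) * Qm χ N χ' k * VTm Γ Λ N χ' k (cfgE N ρ)))
      = ((Vm Γ Λ N k (cfgE N ρ))ᴴ *
        ((mpsW χ Γ Λ k (cfgE N ρ))ᴴ * (mpsW χ Γ Λ k (cfgE N ρ) *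
          (Qm χ N χ' k * VTm Γ Λ N χ' k (cfgE N ρ))))) := by
      simp only [Matrix.conjTranspose_mul, Matrix.mul_assoc]
    rw [hre]
    rw [Matrix.trace_mul_comm]
    simp only [Matrix.mul_assoc]
  rw [Finset.sum_congr rfl (fun ρ _ => hpt ρ)]
  set A : (Fin N → Fin d) → Matrix (Fin (χ k)) (Fin (χ k)) ℂ :=
    fun ρ => (mpsW χ Γ Λ k (cfgE N ρ))ᴴ * mpsW χ Γ Λ k (cfgE N ρ) with hA
  set C : (Fin N → Fin d) → Matrix (Fin (χ k)) (Fin (χ k)) ℂ :=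
    fun ρ => VTm Γ Λ N χ' k (cfgE N ρ) * (Vm Γ Λ N k (cfgE N ρ))ᴴ with hC
  have hcomb : ∀ σ τ : Fin N → Fin d,
      (fun ρ => Matrix.trace (A ρ * (Qm χ N χ' k * C ρ)))
        (fun i => if (i : ℕ) < k then σ i else τ i)
      = Matrix.trace (A σ * (Qm χ N χ' k * C τ)) := by
    intro σ τ
    simp only [hA, hC]
    rw [mpsW_congr Γ Λ k _ _ (cfgE_comb_lt hk σ τ),
      VTm_congr Γ Λ N χ' k _ _ (cfgE_comb_lt_ge σ τ),
      Vm_congr Γ Λ N k _ _ (cfgE_comb_lt_ge σ τ)]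
  have hgad := sum_combine (fun i : Fin N => (i : ℕ) < k)
    (fun ρ => Matrix.trace (A ρ * (Qm χ N χ' k * C ρ)))
  rw [← Nat.cast_pow, ← nsmul_eq_mul, ← hgad,
    Finset.sum_congr rfl (fun σ _ => Finset.sum_congr rfl (fun τ _ => hcomb σ τ))]
  have hswap : ∑ σ : Fin N → Fin d, ∑ τ : Fin N → Fin d,
      Matrix.trace (A σ * (Qm χ N χ' k * C τ))
      = Matrix.trace ((∑ σ : Fin N → Fin d, A σ) *
          (Qm χ N χ' k * ∑ τ : Fin N → Fin d, C τ)) := by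
    rw [Matrix.sum_mul, Matrix.trace_sum]
    apply Finset.sum_congr rfl
    intro σ _
    rw [Matrix.mul_sum, Matrix.mul_sum, Matrix.trace_sum]
  rw [hswap, hA]
  rw [GW_eq Γ Λ N hcano k hk]
  rw [Matrix.smul_mul, Matrix.trace_smul, smul_eq_mul]
  rfl

/-- One-step trace identity from left canonical form. -/
lemma trace_step (N χ' k : ℕ) (hk : k < N) (hcano : IsCanonicalMPS N χ Γ Λ) :
    (d : ℂ) * Matrix.trace ((Λ k)ᴴ * Λ k * Mmix Γ Λ N χ' k)
      = Matrix.trace ((Λ (k+1))ᴴ * Λ (k+1) * (Qm χ N χ' (k+1) * Mmix Γ Λ N χ' (k+1))) := by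
  have h1 : (d : ℂ) * Matrix.trace ((Λ k)ᴴ * Λ k * Mmix Γ Λ N χ' k)
      = Matrix.trace ((Λ k)ᴴ * Λ k * ((d : ℂ) • Mmix Γ Λ N χ' k)) := by
    rw [Matrix.mul_smul, Matrix.trace_smul, smul_eq_mul]
  rw [h1, Mmix_rec Γ Λ N χ' k hk, Matrix.mul_sum, Matrix.trace_sum]
  have h2 : ∀ s : Fin d,
      Matrix.trace ((Λ k)ᴴ * Λ k * ((Γ k s * Λ (k+1) * Qm χ N χ' (k+1)) *
          Mmix Γ Λ N χ' (k+1) * (Γ k s * Λ (k+1))ᴴ))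
      = Matrix.trace (((Λ k * Γ k s)ᴴ * (Λ k * Γ k s)) *
          (Λ (k+1) * (Qm χ N χ' (k+1) * (Mmix Γ Λ N χ' (k+1) * (Λ (k+1))ᴴ)))) := by
    intro s
    have hre : (Λ k)ᴴ * Λ k * ((Γ k s * Λ (k+1) * Qm χ N χ' (k+1)) *
          Mmix Γ Λ N χ' (k+1) * (Γ k s * Λ (k+1))ᴴ)
        = ((Λ k)ᴴ * (Λ k * (Γ k s * (Λ (k+1) * (Qm χ N χ' (k+1) *
            (Mmix Γ Λ N χ' (k+1) * (Λ (k+1))ᴴ)))))) * (Γ k s)ᴴ := by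
      simp only [Matrix.conjTranspose_mul, Matrix.mul_assoc]
    rw [hre]
    rw [Matrix.trace_mul_comm]
    simp only [Matrix.conjTranspose_mul, Matrix.mul_assoc]
  rw [Finset.sum_congr rfl (fun s _ => h2 s), ← Matrix.trace_sum, ← Matrix.sum_mul,
    (hcano k hk).1, Matrix.one_mul]
  have hre2 : Λ (k+1) * (Qm χ N χ' (k+1) * (Mmix Γ Λ N χ' (k+1) * (Λ (k+1))ᴴ))
      = (Λ (k+1) * (Qm χ N χ' (k+1) * Mmix Γ Λ N χ' (k+1))) * (Λ (k+1))ᴴ := by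
    simp only [Matrix.mul_assoc]
  rw [hre2]
  rw [Matrix.trace_mul_comm]
  simp only [Matrix.mul_assoc]

/-- Diagonal entries of `Mmix` are bounded by `d ^ k`. -/
lemma Mmix_diag_bound (N χ' k : ℕ) (hk : k ≤ N) (hcano : IsCanonicalMPS N χ Γ Λ)
    (α : Fin (χ k)) : ‖Mmix Γ Λ N χ' k α α‖ ≤ (d : ℝ) ^ k := by
  have hent : Mmix Γ Λ N χ' k α α = ∑ σ : Fin N → Fin d, ∑ b,
      VTm Γ Λ N χ' k (cfgE N σ) α b * (starRingEnd ℂ) (Vm Γ Λ N k (cfgE N σ) α b) := by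
    rw [Mmix, Matrix.sum_apply]
    apply Finset.sum_congr rfl
    intro σ _
    rw [Matrix.mul_apply]
    apply Finset.sum_congr rfl
    intro b _
    rw [Matrix.conjTranspose_apply, Complex.star_def]
  have hrow : ∀ (M : Matrix (Fin (χ k)) (Fin (χ N)) ℂ) (b : Fin (χ N)),
      M α b = ((Pi.single α (1:ℂ)) ᵥ* M) b := by
    intro M b
    rw [Matrix.single_vecMul]
    simp
  have hone : ∑ β : Fin (χ k), ‖(Pi.single α (1:ℂ) : Fin (χ k) → ℂ) β‖ ^ 2 = 1 := by
    rw [Finset.sum_eq_single α (fun β _ hβ => by simp [Pi.single_apply, hβ]) (by simp)]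
    simp
  have hVT : ∑ σ : Fin N → Fin d, ∑ b, ‖VTm Γ Λ N χ' k (cfgE N σ) α b‖ ^ 2 ≤ (d:ℝ)^k := by
    have := VT_row_bound Γ Λ N χ' hcano k hk (Pi.single α (1:ℂ))
    rw [hone, mul_one] at this
    refine le_trans (le_of_eq ?_) this
    apply Finset.sum_congr rfl
    intro σ _
    apply Finset.sum_congr rfl
    intro b _
    rw [hrow (VTm Γ Λ N χ' k (cfgE N σ)) b]
  have hV : ∑ σ : Fin N → Fin d, ∑ b, ‖Vm Γ Λ N k (cfgE N σ) α b‖ ^ 2 ≤ (d:ℝ)^k := by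
    have := V_row_bound Γ Λ N hcano k hk (Pi.single α (1:ℂ))
    rw [hone, mul_one] at this
    refine le_trans (le_of_eq ?_) this
    apply Finset.sum_congr rfl
    intro σ _
    apply Finset.sum_congr rfl
    intro b _
    rw [hrow (Vm Γ Λ N k (cfgE N σ)) b]
  have habs : ‖Mmix Γ Λ N χ' k α α‖ ≤ ∑ σ : Fin N → Fin d, ∑ b,
      ‖VTm Γ Λ N χ' k (cfgE N σ) α b‖ * ‖Vm Γ Λ N k (cfgE N σ) α b‖ := by
    rw [hent]
    refine le_trans (norm_sum_le _ _) (Finset.sum_le_sum fun σ _ => ?_)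
    refine le_trans (norm_sum_le _ _) (Finset.sum_le_sum fun b _ => ?_)
    rw [norm_mul, RCLike.norm_conj]
  set X : ((Fin N → Fin d) × Fin (χ N)) → ℝ :=
    fun x => ‖VTm Γ Λ N χ' k (cfgE N x.1) α x.2‖ with hX
  set Y : ((Fin N → Fin d) × Fin (χ N)) → ℝ :=
    fun x => ‖Vm Γ Λ N k (cfgE N x.1) α x.2‖ with hY
  have hCS := Finset.sum_mul_sq_le_sq_mul_sq Finset.univ X Y
  have hXs : ∑ x, X x ^ 2 ≤ (d:ℝ)^k := by
    rw [Fintype.sum_prod_type]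
    exact hVT
  have hYs : ∑ x, Y x ^ 2 ≤ (d:ℝ)^k := by
    rw [Fintype.sum_prod_type]
    exact hV
  have hXY : ∑ σ : Fin N → Fin d, ∑ b,
      ‖VTm Γ Λ N χ' k (cfgE N σ) α b‖ * ‖Vm Γ Λ N k (cfgE N σ) α b‖
      = ∑ x, X x * Y x := by
    rw [Fintype.sum_prod_type]
  have hd0 : (0:ℝ) ≤ (d : ℝ) ^ k := by positivity
  have hsum_nonneg : 0 ≤ ∑ x, X x * Y x :=
    Finset.sum_nonneg fun x _ => mul_nonneg (norm_nonneg _) (norm_nonneg _)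
  have hXs0 : (0:ℝ) ≤ ∑ x, X x ^ 2 := Finset.sum_nonneg fun x _ => sq_nonneg _
  have hYs0 : (0:ℝ) ≤ ∑ x, Y x ^ 2 := Finset.sum_nonneg fun x _ => sq_nonneg _
  have h2 : (∑ x, X x * Y x) ^ 2 ≤ ((d:ℝ)^k) ^ 2 := by
    calc (∑ x, X x * Y x) ^ 2 ≤ (∑ x, X x ^ 2) * ∑ x, Y x ^ 2 := hCS
      _ ≤ ((d:ℝ)^k) ^ 2 := by
        rw [pow_two]
        exact mul_le_mul hXs hYs hYs0 hd0
  have h3 : ∑ x, X x * Y x ≤ (d:ℝ)^k := by nlinarith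
  calc ‖Mmix Γ Λ N χ' k α α‖
      ≤ ∑ σ : Fin N → Fin d, ∑ b,
        ‖VTm Γ Λ N χ' k (cfgE N σ) α b‖ * ‖Vm Γ Λ N k (cfgE N σ) α b‖ := habs
    _ = ∑ x, X x * Y x := hXY
    _ ≤ (d:ℝ)^k := h3

lemma Qm_zero (N χ' : ℕ) (h0 : χ 0 = 1) (hχ' : 1 ≤ χ') : Qm χ N χ' 0 = 1 := by
  rw [Qm]
  split_ifs with h
  · rw [truncP]
    have : (fun α : Fin (χ 0) => if (α : ℕ) < χ' then (1:ℂ) else 0) = fun _ => 1 := by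
      funext α
      have : (α : ℕ) < χ' := by
        have := α.isLt
        omega
      rw [if_pos this]
    rw [this, Matrix.diagonal_one]
  · rfl

lemma Qm_N (N χ' : ℕ) : Qm χ N χ' N = 1 := by
  rw [Qm, if_neg (lt_irrefl N)]

lemma locErr_zero (χ' : ℕ) (h0 : χ 0 = 1) (hχ' : 1 ≤ χ') : locErr χ' χ Λ 0 = 0 := by
  rw [locErr]
  apply Finset.sum_eq_zero
  intro α _
  have : (α : ℕ) < χ' := by
    have := α.isLt
    omega
  rw [if_neg (by omega)]

end MPSAux

/-- Theorem 1 of the paper, fidelity bound: for an `N`-site MPS in canonical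
form with normalized wavefunction and a truncation rank `χ'` with `2 ε(χ') < 1`, the fidelity
of the renormalized truncated state `Ψ_T = Ψ̃_T / ‖Ψ̃_T‖` with `Ψ` satisfies
`𝓕₂ = |⟨Ψ, Ψ_T⟩|² ≥ 1 − 2 ε(χ')`. -/
theorem parallel_mps_compression_fidelity_bound
    (N d : ℕ) [NeZero d] (hN : 1 ≤ N)
    (χ : ℕ → ℕ) (hχ0 : χ 0 = 1) (hχN : χ N = 1) (hχpos : ∀ i, 1 ≤ χ i)
    (Γ : (i : ℕ) → Fin d → Matrix (Fin (χ i)) (Fin (χ (i + 1))) ℂ)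
    (Λ : (i : ℕ) → Matrix (Fin (χ i)) (Fin (χ i)) ℂ)
    (hΛ0 : Λ 0 = 1) (hΛN : Λ N = 1)
    (hΛdiag : ∀ i ≤ N, (Λ i).IsDiag)
    (hΛreal : ∀ i ≤ N, ∀ α, (Λ i α α).im = 0 ∧ 0 ≤ (Λ i α α).re)
    (hΛdesc : ∀ i ≤ N, ∀ α β : Fin (χ i), α ≤ β → (Λ i β β).re ≤ (Λ i α α).re)
    (hcano : IsCanonicalMPS N χ Γ Λ)
    (hnorm : ∑ σ : Fin N → Fin d, ‖mpsPsi N χ Γ Λ σ‖ ^ 2 = 1)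
    (χ' : ℕ) (hχ' : 1 ≤ χ')
    (hsmall : 2 * globErr N χ' χ Λ < 1) :
    1 - 2 * globErr N χ' χ Λ ≤
      ‖∑ σ : Fin N → Fin d, (starRingEnd ℂ) (mpsPsi N χ Γ Λ σ) *
        (mpsPsiT N χ' χ Γ Λ σ /
          (Real.sqrt (∑ τ : Fin N → Fin d, ‖mpsPsiT N χ' χ Γ Λ τ‖ ^ 2) : ℂ))‖ ^ 2 := by
  classical
  have hd0 : (0:ℝ) < (d:ℝ) := by
    have := NeZero.ne d
    positivity
  have hloc_nonneg : ∀ i, 0 ≤ locErr χ' χ Λ i := by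
    intro i
    rw [locErr]
    apply Finset.sum_nonneg
    intro α _
    positivity
  have hεnn : 0 ≤ globErr N χ' χ Λ := Finset.sum_nonneg fun i _ => hloc_nonneg i
  haveI hsub0 : Subsingleton (Fin (χ 0)) :=
    Fintype.card_le_one_iff_subsingleton.mp (by rw [Fintype.card_fin, hχ0])
  haveI hsubN : Subsingleton (Fin (χ N)) :=
    Fintype.card_le_one_iff_subsingleton.mp (by rw [Fintype.card_fin, hχN])
  set F : ℕ → ℂ := fun k => ∑ σ : Fin N → Fin d, (starRingEnd ℂ) (mpsPsi N χ Γ Λ σ) *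
      (∑ a, ∑ b, (mpsW χ Γ Λ k (cfgE N σ) * Qm χ N χ' k * VTm Γ Λ N χ' k (cfgE N σ)) a b)
    with hFdef
  have hFN : F N = 1 := by
    have hpt : ∀ σ : Fin N → Fin d,
        (∑ a, ∑ b, (mpsW χ Γ Λ N (cfgE N σ) * Qm χ N χ' N * VTm Γ Λ N χ' N (cfgE N σ)) a b)
          = mpsPsi N χ Γ Λ σ := by
      intro σ
      rw [Qm_N, VTm_def, dif_neg (lt_irrefl N), pid_eq_one, Matrix.mul_one, Matrix.mul_one]
      rfl
    have hc : ∀ z : ℂ, (starRingEnd ℂ) z * z = ((‖z‖^2 : ℝ) : ℂ) := by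
      intro z
      rw [mul_comm, Complex.mul_conj, Complex.normSq_eq_norm_sq]
    have hstep : F N = ∑ σ : Fin N → Fin d, ((‖mpsPsi N χ Γ Λ σ‖^2 : ℝ) : ℂ) := by
      simp only [hFdef]
      exact Finset.sum_congr rfl fun σ _ => by rw [hpt σ, hc]
    have hcast : ∑ σ : Fin N → Fin d, ((‖mpsPsi N χ Γ Λ σ‖^2 : ℝ) : ℂ)
        = ((∑ σ : Fin N → Fin d, ‖mpsPsi N χ Γ Λ σ‖^2 : ℝ) : ℂ) := by
      push_cast
      rfl
    rw [hstep, hcast, hnorm]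
    norm_num
  have hF0 : F 0 = ∑ σ : Fin N → Fin d,
      (starRingEnd ℂ) (mpsPsi N χ Γ Λ σ) * mpsPsiT N χ' χ Γ Λ σ := by
    simp only [hFdef]
    apply Finset.sum_congr rfl
    intro σ _
    congr 1
    have hT : mpsPsiT N χ' χ Γ Λ σ
        = ∑ a, ∑ b, (Λ 0 * VTm Γ Λ N χ' 0 (cfgE N σ)) a b := by
      show (∑ a, ∑ b, (mpsWT N χ' χ Γ Λ N (cfgE N σ)) a b) = _
      rw [mpsWT_split Γ Λ N χ' 0 (Nat.zero_le N) (cfgE N σ)]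
      rfl
    rw [hT]
    have hmat : mpsW χ Γ Λ 0 (cfgE N σ) * Qm χ N χ' 0 * VTm Γ Λ N χ' 0 (cfgE N σ)
        = Λ 0 * VTm Γ Λ N χ' 0 (cfgE N σ) := by
      rw [Qm_zero N χ' hχ0 hχ', Matrix.mul_one]
      rfl
    rw [hmat]
  have hkey : ∀ k, k < N → ‖F (k+1) - F k‖ ≤ locErr χ' χ Λ k := by
    intro k hkN
    have hI1 := overlap_eq Γ Λ N χ' hχ0 hχN hcano k hkN.le
    have hI2 := overlap_eq Γ Λ N χ' hχ0 hχN hcano (k+1) hkN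
    have hT := trace_step Γ Λ N χ' k hkN hcano
    set M := Mmix Γ Λ N χ' k with hM
    set Tf := Matrix.trace ((Λ k)ᴴ * Λ k * M) with hTf
    set T1 := Matrix.trace ((Λ k)ᴴ * Λ k * (Qm χ N χ' k * M)) with hT1
    have e1 : (d:ℂ)^N * (F (k+1) - F k) = (d:ℂ)^(N-k) * (Tf - T1) := by
      have epow : (d:ℂ)^(N-k) = (d:ℂ)^(N-(k+1)) * d := by
        rw [← pow_succ]
        congr 1
        omega
      rw [mul_sub, mul_sub]
      simp only [hFdef]
      rw [hI1, hI2, ← hT, epow]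
      ring
    have e2 : (d:ℝ)^N * ‖F (k+1) - F k‖ = (d:ℝ)^(N-k) * ‖Tf - T1‖ := by
      have h := congrArg norm e1
      rw [norm_mul, norm_mul, norm_pow, norm_pow, Complex.norm_natCast] at h
      exact h
    have hdiagΛ : Λ k = Matrix.diagonal (Matrix.diag (Λ k)) :=
      ((hΛdiag k hkN.le).diagonal_diag).symm
    set c : Fin (χ k) → ℂ := fun α => (starRingEnd ℂ) (Λ k α α) * (Λ k α α) with hcdef
    set q : Fin (χ k) → ℂ := fun α => if (α:ℕ) < χ' then 1 else 0 with hqdef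
    have hTfd : Tf = ∑ α, c α * M α α := by
      rw [hTf]
      conv_lhs => rw [hdiagΛ]
      rw [Matrix.diagonal_conjTranspose, Matrix.diagonal_mul_diagonal, trace_diagonal_mul]
      apply Finset.sum_congr rfl
      intro α _
      simp [hcdef, Matrix.diag]
    have hT1d : T1 = ∑ α, (c α * q α) * M α α := by
      rw [hT1]
      have hQ : Qm χ N χ' k = Matrix.diagonal q := by
        rw [Qm, if_pos hkN, truncP]
      conv_lhs => rw [hdiagΛ, hQ]
      rw [Matrix.diagonal_conjTranspose, Matrix.diagonal_mul_diagonal, ← Matrix.mul_assoc,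
        Matrix.diagonal_mul_diagonal, trace_diagonal_mul]
      apply Finset.sum_congr rfl
      intro α _
      simp [hcdef, Matrix.diag]
    have hdiff : Tf - T1 = ∑ α : Fin (χ k), (if χ' ≤ (α:ℕ) then c α * M α α else 0) := by
      rw [hTfd, hT1d, ← Finset.sum_sub_distrib]
      apply Finset.sum_congr rfl
      intro α _
      by_cases hα : (α:ℕ) < χ'
      · rw [if_neg (by omega)]
        simp [hqdef, hα]
      · rw [if_pos (by omega)]
        simp [hqdef, hα]
    have hnormdiff : ‖Tf - T1‖ ≤ (d:ℝ)^k * locErr χ' χ Λ k := by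
      rw [hdiff]
      refine le_trans (norm_sum_le _ _) ?_
      rw [locErr, Finset.mul_sum]
      apply Finset.sum_le_sum
      intro α _
      by_cases hα : χ' ≤ (α:ℕ)
      · rw [if_pos hα, if_pos hα, norm_mul]
        have hcnorm : ‖c α‖ = (Λ k α α).re ^ 2 := by
          have him := (hΛreal k hkN.le α).1
          have h2 : ‖Λ k α α‖ * ‖Λ k α α‖ = (Λ k α α).re ^ 2 := by
            have : ‖Λ k α α‖^2 = (Λ k α α).re^2 := by
              rw [Complex.sq_norm, Complex.normSq_apply, him]
              ring
            nlinarith [this]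
          calc ‖c α‖ = ‖Λ k α α‖ * ‖Λ k α α‖ := by
                rw [hcdef]
                simp only []
                rw [norm_mul, RCLike.norm_conj]
            _ = (Λ k α α).re ^ 2 := h2
        have hMb := Mmix_diag_bound Γ Λ N χ' k hkN.le hcano α
        calc ‖c α‖ * ‖M α α‖ ≤ ((Λ k α α).re^2) * (d:ℝ)^k := by
              rw [hcnorm]
              exact mul_le_mul_of_nonneg_left hMb (by positivity)
          _ = (d:ℝ)^k * (Λ k α α).re^2 := mul_comm _ _
      · rw [if_neg hα, if_neg hα, mul_zero, norm_zero]
    have hdNpos : (0:ℝ) < (d:ℝ)^N := pow_pos hd0 N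
    rw [← mul_le_mul_iff_right₀ hdNpos, e2]
    calc (d:ℝ)^(N-k) * ‖Tf - T1‖ ≤ (d:ℝ)^(N-k) * ((d:ℝ)^k * locErr χ' χ Λ k) :=
          mul_le_mul_of_nonneg_left hnormdiff (by positivity)
      _ = (d:ℝ)^N * locErr χ' χ Λ k := by
          rw [← mul_assoc, ← pow_add]
          congr 2
          omega
  have htel : ‖1 - F 0‖ ≤ globErr N χ' χ Λ := by
    have hsum : F N - F 0 = ∑ k ∈ Finset.range N, (F (k+1) - F k) :=
      (Finset.sum_range_sub F N).symm
    rw [← hFN, hsum]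
    refine le_trans (norm_sum_le _ _) ?_
    have hb : ∑ k ∈ Finset.range N, ‖F (k+1) - F k‖
        ≤ ∑ k ∈ Finset.range N, locErr χ' χ Λ k :=
      Finset.sum_le_sum fun k hk => hkey k (Finset.mem_range.mp hk)
    refine le_trans hb (le_of_eq ?_)
    rw [globErr, Finset.range_eq_Ico,
      ← Finset.sum_Ico_consecutive (fun i => locErr χ' χ Λ i)
        (by omega : (0:ℕ) ≤ 1) (by omega : 1 ≤ N)]
    have h01 : ∑ i ∈ Finset.Ico 0 1, locErr χ' χ Λ i = 0 := by
      rw [← Finset.range_eq_Ico, Finset.sum_range_one, locErr_zero Λ χ' hχ0 hχ']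
    rw [h01, zero_add]
  set nv := ∑ τ : Fin N → Fin d, ‖mpsPsiT N χ' χ Γ Λ τ‖ ^ 2 with hnvdef
  have hnvnn : 0 ≤ nv := Finset.sum_nonneg fun τ _ => sq_nonneg _
  have ha0 : 0 < χ 0 := by omega
  have hb0 : 0 < χ N := by omega
  set a0 : Fin (χ 0) := ⟨0, ha0⟩ with ha0def
  set b0 : Fin (χ N) := ⟨0, hb0⟩ with hb0def
  have hpsiT : ∀ σ : Fin N → Fin d,
      mpsPsiT N χ' χ Γ Λ σ = VTm Γ Λ N χ' 0 (cfgE N σ) a0 b0 := by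
    intro σ
    have h1 : mpsPsiT N χ' χ Γ Λ σ
        = ∑ a, ∑ b, (Λ 0 * VTm Γ Λ N χ' 0 (cfgE N σ)) a b := by
      show (∑ a, ∑ b, (mpsWT N χ' χ Γ Λ N (cfgE N σ)) a b) = _
      rw [mpsWT_split Γ Λ N χ' 0 (Nat.zero_le N) (cfgE N σ)]
      rfl
    rw [h1, hΛ0]
    rw [Fintype.sum_subsingleton
      (fun a => ∑ b, ((1 : Matrix (Fin (χ 0)) (Fin (χ 0)) ℂ) * VTm Γ Λ N χ' 0 (cfgE N σ)) a b) a0,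
      Fintype.sum_subsingleton _ b0, Matrix.one_mul]
  have hone0 : ∑ β : Fin (χ 0), ‖(Pi.single a0 (1:ℂ) : Fin (χ 0) → ℂ) β‖ ^ 2 = 1 := by
    rw [Finset.sum_eq_single a0 (fun β _ hβ => by simp [Pi.single_apply, hβ]) (by simp)]
    simp
  have hnv1 : nv ≤ 1 := by
    have hrowb := VT_row_bound Γ Λ N χ' hcano 0 (Nat.zero_le N) (Pi.single a0 (1:ℂ))
    rw [hone0, mul_one, pow_zero] at hrowb
    calc nv = ∑ σ : Fin N → Fin d, ‖VTm Γ Λ N χ' 0 (cfgE N σ) a0 b0‖^2 := by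
          rw [hnvdef]
          exact Finset.sum_congr rfl fun σ _ => by rw [hpsiT σ]
      _ ≤ ∑ σ : Fin N → Fin d, ∑ b, ‖VTm Γ Λ N χ' 0 (cfgE N σ) a0 b‖^2 := by
          apply Finset.sum_le_sum
          intro σ _
          exact Finset.single_le_sum (f := fun b => ‖VTm Γ Λ N χ' 0 (cfgE N σ) a0 b‖^2)
            (fun b _ => sq_nonneg _) (Finset.mem_univ b0)
      _ = ∑ σ : Fin N → Fin d, ∑ b, ‖((Pi.single a0 (1:ℂ)) ᵥ* VTm Γ Λ N χ' 0 (cfgE N σ)) b‖^2 := by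
          apply Finset.sum_congr rfl
          intro σ _
          apply Finset.sum_congr rfl
          intro b _
          rw [Matrix.single_vecMul]
          simp
      _ ≤ 1 := hrowb
  have hCS : ‖F 0‖^2 ≤ nv := by
    have h1 : ‖F 0‖ ≤ ∑ σ : Fin N → Fin d, ‖mpsPsi N χ Γ Λ σ‖ * ‖mpsPsiT N χ' χ Γ Λ σ‖ := by
      rw [hF0]
      refine le_trans (norm_sum_le _ _) (Finset.sum_le_sum fun σ _ => le_of_eq ?_)
      rw [norm_mul, RCLike.norm_conj]
    have h2 := Finset.sum_mul_sq_le_sq_mul_sq Finset.univ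
      (fun σ : Fin N → Fin d => ‖mpsPsi N χ Γ Λ σ‖)
      (fun σ : Fin N → Fin d => ‖mpsPsiT N χ' χ Γ Λ σ‖)
    rw [hnorm, one_mul] at h2
    have h3 : (0:ℝ) ≤ ∑ σ : Fin N → Fin d, ‖mpsPsi N χ Γ Λ σ‖ * ‖mpsPsiT N χ' χ Γ Λ σ‖ :=
      Finset.sum_nonneg fun σ _ => mul_nonneg (norm_nonneg _) (norm_nonneg _)
    nlinarith [norm_nonneg (F 0)]
  have h1ε : 1 - globErr N χ' χ Λ ≤ ‖F 0‖ := by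
    have h := norm_sub_norm_le (1 : ℂ) (1 - F 0)
    rw [sub_sub_cancel, norm_one] at h
    linarith [htel]
  have hεhalf : 0 < 1 - globErr N χ' χ Λ := by linarith [hεnn, hsmall]
  have hF0sq : (1 - globErr N χ' χ Λ)^2 ≤ ‖F 0‖^2 := by nlinarith [h1ε, hεhalf]
  have hnvpos : 0 < nv := by nlinarith [hCS, hF0sq, hεhalf]
  have hgoalsum : ∑ σ : Fin N → Fin d, (starRingEnd ℂ) (mpsPsi N χ Γ Λ σ) *
        (mpsPsiT N χ' χ Γ Λ σ / ((Real.sqrt nv : ℝ) : ℂ))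
      = F 0 / ((Real.sqrt nv : ℝ) : ℂ) := by
    rw [hF0, Finset.sum_div]
    apply Finset.sum_congr rfl
    intro σ _
    rw [mul_div_assoc]
  rw [hgoalsum, norm_div, div_pow]
  have hnc : ‖((Real.sqrt nv : ℝ) : ℂ)‖^2 = nv := by
    rw [Complex.norm_real, Real.norm_eq_abs, abs_of_nonneg (Real.sqrt_nonneg _), Real.sq_sqrt hnvnn]
  rw [hnc, le_div_iff₀ hnvpos]
  nlinarith [hF0sq, hnv1, hnvpos, hεnn, hsmall, sq_nonneg (globErr N χ' χ Λ)]
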